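/- Let B ∈ K_{x,y} be a minimizing matrix (i.e., attaining k(x,y)). Then ‖B⁻¹·(i,1)ᵀ‖² = ‖B⁻¹·(-i,1)ᵀ‖² = k(x,y) + k(x,y)⁻¹. -/

import Mathlib

open Matrix Complex Filter

noncomputable section

/-- Operator norm of a 2×2 complex matrix acting on ℂ². -/
def opN (A : Matrix (Fin 2) (Fin 2) ℂ) : ℝ :=
  ‖Matrix.toEuclideanCLM (𝕜 := ℂ) (n := Fin 2) A‖

/-- Determinant of the 2×2 matrix with columns u, v. -/
def crossDet (u v : Fin 2 → ℂ) : ℂ := u 0 * v 1 - u 1 * v 0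

/-- Euclidean norm of a vector in ℂ². -/
def vnorm (u : Fin 2 → ℂ) : ℝ := Real.sqrt (‖u 0‖ ^ 2 + ‖u 1‖ ^ 2)

/-- Sine-of-angle distance between the directions of two nonzero vectors. -/
def dSin (u v : Fin 2 → ℂ) : ℝ := ‖crossDet u v‖ / (vnorm u * vnorm v)

/-- Two vectors span the same direction (are parallel). -/
def SameDir (u v : Fin 2 → ℂ) : Prop := crossDet u v = 0

def vI : Fin 2 → ℂ := ![Complex.I, 1]
def vmI : Fin 2 → ℂ := ![-Complex.I, 1]

abbrev SL2C := Matrix.SpecialLinearGroup (Fin 2) ℂ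

/-- The set K_{x,y} of B ∈ SL(2,ℂ) sending direction x to i and y to -i. -/
def Kset (x y : Fin 2 → ℂ) : Set SL2C :=
  {B | SameDir ((B : Matrix (Fin 2) (Fin 2) ℂ).mulVec x) vI ∧
       SameDir ((B : Matrix (Fin 2) (Fin 2) ℂ).mulVec y) vmI}

/-- k(x,y) = inf over K_{x,y} of ‖B‖². -/
def kfun (x y : Fin 2 → ℂ) : ℝ :=
  sInf ((fun B : SL2C => opN (B : Matrix (Fin 2) (Fin 2) ℂ) ^ 2) '' Kset x y)

/-- B is minimizing: ‖B⁻¹·(i,1)‖ = ‖B⁻¹·(-i,1)‖. -/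
def Minimizing (B : SL2C) : Prop :=
  vnorm ((((B⁻¹ : SL2C) : Matrix (Fin 2) (Fin 2) ℂ)).mulVec vI) =
  vnorm (((B⁻¹ : SL2C) : Matrix (Fin 2) (Fin 2) ℂ).mulVec vmI)

/-- Rotation matrix R_λ, for complex λ. -/
def Rmat (l : ℂ) : Matrix (Fin 2) (Fin 2) ℂ :=
  !![Complex.cos (2 * Real.pi * l), -Complex.sin (2 * Real.pi * l);
     Complex.sin (2 * Real.pi * l), Complex.cos (2 * Real.pi * l)]

/-- Diagonal matrix D_μ = diag(μ, μ⁻¹). -/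
def Dmat (m : ℂ) : Matrix (Fin 2) (Fin 2) ℂ := !![m, 0; 0, m⁻¹]

/-- Möbius action of a 2×2 complex matrix on ℂ. -/
def moebius (A : Matrix (Fin 2) (Fin 2) ℂ) (z : ℂ) : ℂ :=
  (A 0 0 * z + A 0 1) / (A 1 0 * z + A 1 1)

/-- Cocycle product B_n(x) = B(x+(n-1)α) ⋯ B(x). -/
def coc (α : ℝ) (B : ℝ → Matrix (Fin 2) (Fin 2) ℂ) : ℕ → ℝ → Matrix (Fin 2) (Fin 2) ℂ
  | 0, _ => 1
  | n + 1, x => B (x + n * α) * coc α B n x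

/-- Uniform hyperbolicity of the cocycle (α, B), witnessed by continuous
invariant unstable/stable direction fields U, S with exponential expansion/contraction. -/
def UnifHyp (α : ℝ) (B : ℝ → Matrix (Fin 2) (Fin 2) ℂ) (U S : ℝ → Fin 2 → ℂ) : Prop :=
  Continuous U ∧ Continuous S ∧ (∀ x, U x ≠ 0) ∧ (∀ x, S x ≠ 0) ∧
  (∀ x, SameDir (U (x + 1)) (U x)) ∧ (∀ x, SameDir (S (x + 1)) (S x)) ∧
  (∀ x, SameDir ((B x).mulVec (U x)) (U (x + α))) ∧
  (∀ x, SameDir ((B x).mulVec (S x)) (S (x + α))) ∧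
  ∃ C > 0, ∃ lam > 1, ∀ n : ℕ, ∀ x : ℝ,
    vnorm ((coc α B n x).mulVec (U x)) ≥ C⁻¹ * lam ^ n * vnorm (U x) ∧
    vnorm ((coc α B n x).mulVec (S x)) ≤ C * lam⁻¹ ^ n * vnorm (S x)

/-- The Lyapunov exponent of the cocycle (α, B) is L. -/
def IsLE (α : ℝ) (B : ℝ → Matrix (Fin 2) (Fin 2) ℂ) (L : ℝ) : Prop :=
  Tendsto (fun n : ℕ => (n : ℝ)⁻¹ * ∫ x in (0:ℝ)..1, Real.log (opN (coc α B n x)))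
    atTop (nhds L)

/-- Complexification of a real matrix. -/
def cplx (A : Matrix (Fin 2) (Fin 2) ℝ) : Matrix (Fin 2) (Fin 2) ℂ :=
  A.map (Complex.ofReal)

/-- The denominators q_n of the continued fraction approximants. -/
def qden (α : ℝ) (n : ℕ) : ℝ := (GenContFract.of α).dens n

/-- β(α) = limsup (ln q_{n+1})/q_n. -/
def betaCF (α : ℝ) : ℝ :=
  Filter.limsup (fun n : ℕ => Real.log (qden α (n + 1)) / qden α n) atTop

end

section Aux
open Matrix Complex

noncomputable def frob (A : Matrix (Fin 2) (Fin 2) ℂ) : ℝ :=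
  ‖A 0 0‖^2 + ‖A 0 1‖^2 + ‖A 1 0‖^2 + ‖A 1 1‖^2

noncomputable def beta (A : Matrix (Fin 2) (Fin 2) ℂ) : ℂ :=
  (starRingEnd ℂ) (A 0 0) * A 0 1 + (starRingEnd ℂ) (A 1 0) * A 1 1

lemma vnorm_sq (u : Fin 2 → ℂ) : vnorm u ^ 2 = ‖u 0‖^2 + ‖u 1‖^2 :=
  Real.sq_sqrt (by positivity)

lemma vnorm_nonneg (u : Fin 2 → ℂ) : 0 ≤ vnorm u := Real.sqrt_nonneg _

lemma vnorm_pos (u : Fin 2 → ℂ) (hu : u ≠ 0) : 0 < vnorm u := by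
  rcases eq_or_lt_of_le (vnorm_nonneg u) with h | h
  · exfalso; apply hu
    have h2 : vnorm u ^ 2 = 0 := by rw [← h]; ring
    rw [vnorm_sq] at h2
    have h0 : ‖u 0‖ = 0 := by nlinarith [norm_nonneg (u 0), norm_nonneg (u 1), sq_nonneg ‖u 0‖, sq_nonneg ‖u 1‖]
    have h1 : ‖u 1‖ = 0 := by nlinarith [norm_nonneg (u 0), norm_nonneg (u 1)]
    funext i
    have e0 : u 0 = 0 := norm_eq_zero.mp h0
    have e1 : u 1 = 0 := norm_eq_zero.mp h1
    fin_cases i <;> simpa using (by assumption : _)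
  · exact h

lemma enorm_sq (w : Fin 2 → ℂ) :
    ‖(WithLp.equiv 2 (Fin 2 → ℂ)).symm w‖ ^ 2 = ‖w 0‖^2 + ‖w 1‖^2 := by
  rw [EuclideanSpace.norm_eq, Real.sq_sqrt (by positivity)]
  simp [Fin.sum_univ_two]

lemma expand_mulVec (A : Matrix (Fin 2) (Fin 2) ℂ) (w : Fin 2 → ℂ) :
    ‖(A.mulVec w) 0‖^2 + ‖(A.mulVec w) 1‖^2
      = (‖A 0 0‖^2 + ‖A 1 0‖^2) * ‖w 0‖^2 + (‖A 0 1‖^2 + ‖A 1 1‖^2) * ‖w 1‖^2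
        + 2 * (((starRingEnd ℂ) (beta A) * (w 0 * (starRingEnd ℂ) (w 1))).re) := by
  simp only [Matrix.mulVec, dotProduct, Fin.sum_univ_two, beta,
    Complex.sq_norm, Complex.normSq_apply, Complex.mul_re, Complex.mul_im,
    Complex.add_re, Complex.add_im, map_add, _root_.map_mul, Complex.conj_re, Complex.conj_im]
  ring

lemma beta_normSq (A : Matrix (Fin 2) (Fin 2) ℂ) (hd : A.det = 1) :
    ‖beta A‖^2 = (‖A 0 0‖^2 + ‖A 1 0‖^2) * (‖A 0 1‖^2 + ‖A 1 1‖^2) - 1 := by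
  have hdet : A 0 0 * A 1 1 - A 0 1 * A 1 0 = 1 := by
    rw [← hd, Matrix.det_fin_two]
  have h1 : ‖A 0 0 * A 1 1 - A 0 1 * A 1 0‖^2 = 1 := by rw [hdet]; simp
  simp only [beta, Complex.sq_norm, Complex.normSq_apply, Complex.mul_re,
    Complex.mul_im, Complex.add_re, Complex.add_im, Complex.sub_re, Complex.sub_im,
    Complex.conj_re, Complex.conj_im] at h1 ⊢
  nlinarith [h1]

end Aux
section Aux2
open Matrix Complex

set_option maxHeartbeats 1000000 in
lemma opN_sq_spec (A : Matrix (Fin 2) (Fin 2) ℂ) (hd : A.det = 1) :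
    1 ≤ opN A ^ 2 ∧ opN A ^ 2 + (opN A ^ 2)⁻¹ = frob A := by
  set α : ℝ := ‖A 0 0‖^2 + ‖A 1 0‖^2 with hα_def
  set δ : ℝ := ‖A 0 1‖^2 + ‖A 1 1‖^2 with hδ_def
  have hβ : ‖beta A‖^2 = α * δ - 1 := beta_normSq A hd
  have hT : frob A = α + δ := by rw [frob, hα_def, hδ_def]; ring
  have hαnn : 0 ≤ α := by positivity
  have hδnn : 0 ≤ δ := by positivity
  have hαδ : 1 ≤ α * δ := by linarith [sq_nonneg ‖beta A‖]
  have hT2 : 2 ≤ α + δ := by nlinarith [sq_nonneg (α - δ)]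
  have hT4 : 0 ≤ (α + δ)^2 - 4 := by nlinarith
  set s : ℝ := Real.sqrt ((α + δ)^2 - 4) with hs_def
  have hs_nn : 0 ≤ s := Real.sqrt_nonneg _
  have hs_sq : s^2 = (α + δ)^2 - 4 := Real.sq_sqrt hT4
  set lam : ℝ := ((α + δ) + s)/2 with hlam_def
  have hlam1 : 1 ≤ lam := by rw [hlam_def]; linarith
  have hlam_eq : lam^2 = (α + δ) * lam - 1 := by
    rw [hlam_def]; linear_combination hs_sq / 4
  have hsd : (α - δ)^2 ≤ s^2 := by nlinarith [sq_nonneg ‖beta A‖]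
  have habs : |α - δ| ≤ s := by
    calc |α - δ| = Real.sqrt ((α - δ)^2) := (Real.sqrt_sq_eq_abs _).symm
      _ ≤ Real.sqrt (s^2) := Real.sqrt_le_sqrt hsd
      _ = s := Real.sqrt_sq hs_nn
  obtain ⟨habs1, habs2⟩ := abs_le.mp habs
  have hαle : α ≤ lam := by rw [hlam_def]; linarith
  have hδle : δ ≤ lam := by rw [hlam_def]; linarith
  have hprod : (lam - α) * (lam - δ) = ‖beta A‖^2 := by
    rw [hβ]; linear_combination hlam_eq
  -- the quadratic form bound
  have key : ∀ w : Fin 2 → ℂ,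
      ‖(A.mulVec w) 0‖^2 + ‖(A.mulVec w) 1‖^2 ≤ lam * (‖w 0‖^2 + ‖w 1‖^2) := by
    intro w
    rw [expand_mulVec]
    have hre : ((starRingEnd ℂ) (beta A) * (w 0 * (starRingEnd ℂ) (w 1))).re
        ≤ ‖beta A‖ * (‖w 0‖ * ‖w 1‖) := by
      calc ((starRingEnd ℂ) (beta A) * (w 0 * (starRingEnd ℂ) (w 1))).re
          ≤ ‖(starRingEnd ℂ) (beta A) * (w 0 * (starRingEnd ℂ) (w 1))‖ := by
            exact Complex.re_le_norm _
        _ = ‖beta A‖ * (‖w 0‖ * ‖w 1‖) := by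
            simp [norm_mul]
    set X : ℝ := Real.sqrt (lam - α) with hX_def
    set Y : ℝ := Real.sqrt (lam - δ) with hY_def
    have hX2 : X^2 = lam - α := Real.sq_sqrt (by linarith)
    have hY2 : Y^2 = lam - δ := Real.sq_sqrt (by linarith)
    have hXY : X * Y = ‖beta A‖ := by
      rw [hX_def, hY_def, ← Real.sqrt_mul (by linarith), hprod,
        Real.sqrt_sq (norm_nonneg _)]
    have key2 : 2 * ((X*Y) * (‖w 0‖ * ‖w 1‖)) ≤ X^2 * ‖w 0‖^2 + Y^2 * ‖w 1‖^2 := by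
      nlinarith [sq_nonneg (X * ‖w 0‖ - Y * ‖w 1‖)]
    rw [hXY, hX2, hY2] at key2
    nlinarith [hre, key2]
  -- existence of a maximizing vector
  have exv : ∃ v : Fin 2 → ℂ, v ≠ 0 ∧
      ‖(A.mulVec v) 0‖^2 + ‖(A.mulVec v) 1‖^2 = lam * (‖v 0‖^2 + ‖v 1‖^2) := by
    by_cases hb : beta A = 0
    · have hβ0 : α * δ = 1 := by
        have := hβ; rw [hb] at this; simp at this; linarith
      have hs_eq : s^2 = (α - δ)^2 := by rw [hs_sq]; linear_combination 4 * hβ0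
      have hs_abs : s = |α - δ| := by
        rw [← Real.sqrt_sq_eq_abs, ← hs_eq, Real.sqrt_sq hs_nn]
      rcases le_total δ α with hcase | hcase
      · have hlamα : lam = α := by
          rw [hlam_def, hs_abs, _root_.abs_of_nonneg (by linarith : (0:ℝ) ≤ α - δ)]; ring
        refine ⟨![1, 0], fun hcon => by simpa using congrFun hcon 0, ?_⟩
        rw [expand_mulVec]
        have e0 : (![1, 0] : Fin 2 → ℂ) 0 = 1 := rfl
        have e1 : (![1, 0] : Fin 2 → ℂ) 1 = 0 := rfl
        rw [e0, e1, hb, hlamα]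
        simp only [map_zero, mul_zero, zero_mul, Complex.zero_re, norm_one, norm_zero]
        ring
      · have hlamδ : lam = δ := by
          rw [hlam_def, hs_abs, _root_.abs_of_nonpos (by linarith : α - δ ≤ (0:ℝ))]; ring
        refine ⟨![0, 1], fun hcon => by simpa using congrFun hcon 1, ?_⟩
        rw [expand_mulVec]
        have e0 : (![0, 1] : Fin 2 → ℂ) 0 = 0 := rfl
        have e1 : (![0, 1] : Fin 2 → ℂ) 1 = 1 := rfl
        rw [e0, e1, hb, hlamδ]
        simp only [map_zero, mul_zero, zero_mul, Complex.zero_re, norm_one, norm_zero]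
        ring
    · refine ⟨![beta A, ((lam - α : ℝ) : ℂ)], ?_, ?_⟩
      · intro hcon
        apply hb
        have := congrFun hcon 0
        simpa using this
      · rw [expand_mulVec]
        have hv0 : (![beta A, ((lam - α : ℝ) : ℂ)] : Fin 2 → ℂ) 0 = beta A := rfl
        have hv1 : (![beta A, ((lam - α : ℝ) : ℂ)] : Fin 2 → ℂ) 1 = ((lam - α : ℝ) : ℂ) := rfl
        rw [hv0, hv1]
        have hre : ((starRingEnd ℂ) (beta A) * (beta A * (starRingEnd ℂ) ((lam - α : ℝ) : ℂ))).re
            = ‖beta A‖^2 * (lam - α) := by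
          rw [Complex.conj_ofReal, Complex.sq_norm,
            show (starRingEnd ℂ) (beta A) * (beta A * ((lam - α : ℝ) : ℂ))
              = ((Complex.normSq (beta A) * (lam - α) : ℝ) : ℂ) by
                rw [Complex.ofReal_mul, Complex.normSq_eq_conj_mul_self]; ring,
            Complex.ofReal_re]
        rw [hre]
        have hn1 : ‖((lam - α : ℝ) : ℂ)‖^2 = (lam - α)^2 := by
          rw [Complex.norm_real, Real.norm_eq_abs, _root_.sq_abs]
        rw [hn1]
        linear_combination (α - lam) * hprod
  -- conclude opN A = sqrt lam
  have hup : opN A ≤ Real.sqrt lam := by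
    rw [opN]
    apply ContinuousLinearMap.opNorm_le_bound _ (Real.sqrt_nonneg _)
    intro u
    have hrw : Matrix.toEuclideanCLM (𝕜 := ℂ) (n := Fin 2) A u
        = (WithLp.equiv 2 (Fin 2 → ℂ)).symm (A.mulVec (WithLp.equiv 2 (Fin 2 → ℂ) u)) := by
      conv_lhs => rw [← (WithLp.equiv 2 (Fin 2 → ℂ)).symm_apply_apply u]
      exact Matrix.toEuclideanCLM_toLp A _
    rw [hrw]
    set w := WithLp.equiv 2 (Fin 2 → ℂ) u with hw_def
    have hu_eq : ‖u‖ = ‖(WithLp.equiv 2 (Fin 2 → ℂ)).symm w‖ := by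
      rw [hw_def, (WithLp.equiv 2 (Fin 2 → ℂ)).symm_apply_apply]
    rw [hu_eq]
    have h1 : ‖(WithLp.equiv 2 (Fin 2 → ℂ)).symm (A.mulVec w)‖^2
        ≤ (Real.sqrt lam * ‖(WithLp.equiv 2 (Fin 2 → ℂ)).symm w‖)^2 := by
      rw [enorm_sq, mul_pow, Real.sq_sqrt (by linarith), enorm_sq]
      exact key w
    have h2 : 0 ≤ Real.sqrt lam * ‖(WithLp.equiv 2 (Fin 2 → ℂ)).symm w‖ :=
      mul_nonneg (Real.sqrt_nonneg _) (norm_nonneg _)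
    nlinarith [norm_nonneg ((WithLp.equiv 2 (Fin 2 → ℂ)).symm (A.mulVec w))]
  have hlow : Real.sqrt lam ≤ opN A := by
    obtain ⟨v, hv0, hval⟩ := exv
    set u : EuclideanSpace ℂ (Fin 2) := (WithLp.equiv 2 (Fin 2 → ℂ)).symm v with hu_def
    have hrw : Matrix.toEuclideanCLM (𝕜 := ℂ) (n := Fin 2) A u
        = (WithLp.equiv 2 (Fin 2 → ℂ)).symm (A.mulVec v) := by
      exact Matrix.toEuclideanCLM_toLp A v
    have hun : ‖u‖^2 = ‖v 0‖^2 + ‖v 1‖^2 := by rw [hu_def, enorm_sq]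
    have hTu : ‖Matrix.toEuclideanCLM (𝕜 := ℂ) (n := Fin 2) A u‖^2 = lam * ‖u‖^2 := by
      rw [hrw, enorm_sq, hval, hun]
    have hle := (Matrix.toEuclideanCLM (𝕜 := ℂ) (n := Fin 2) A).le_opNorm u
    have hu_pos : 0 < ‖u‖ := by
      rw [norm_pos_iff]
      intro hcon
      apply hv0
      funext i
      have := congrFun (congrArg (WithLp.equiv 2 (Fin 2 → ℂ)) hcon) i
      simpa [hu_def] using this
    have hTu' : ‖Matrix.toEuclideanCLM (𝕜 := ℂ) (n := Fin 2) A u‖ = Real.sqrt lam * ‖u‖ := by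
      have h2 : (Real.sqrt lam * ‖u‖)^2 = lam * ‖u‖^2 := by
        rw [mul_pow, Real.sq_sqrt (by linarith)]
      nlinarith [norm_nonneg (Matrix.toEuclideanCLM (𝕜 := ℂ) (n := Fin 2) A u),
        mul_nonneg (Real.sqrt_nonneg lam) (norm_nonneg u), hTu]
    rw [hTu'] at hle
    rw [opN]
    calc Real.sqrt lam = Real.sqrt lam * ‖u‖ / ‖u‖ := by field_simp
      _ ≤ ‖Matrix.toEuclideanCLM (𝕜 := ℂ) (n := Fin 2) A‖ * ‖u‖ / ‖u‖ := by
          apply div_le_div_of_nonneg_right  -- maybe wrong name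
          · exact hle
          · exact hu_pos.le
      _ = ‖Matrix.toEuclideanCLM (𝕜 := ℂ) (n := Fin 2) A‖ := by field_simp
  have hopN : opN A = Real.sqrt lam := le_antisymm hup hlow
  have hopN2 : opN A ^ 2 = lam := by rw [hopN, Real.sq_sqrt (by linarith)]
  constructor
  · rw [hopN2]; exact hlam1
  · rw [hopN2, hT]
    have hinv : lam⁻¹ = (α + δ) - lam := by
      have hmul : lam * ((α + δ) - lam) = 1 := by linear_combination -hlam_eq
      exact inv_eq_of_mul_eq_one_right hmul
    rw [hinv]; ring

end Aux2
section Aux3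
open Matrix Complex

lemma vI_0 : vI 0 = Complex.I := rfl
lemma vI_1 : vI 1 = (1 : ℂ) := rfl
lemma vmI_0 : vmI 0 = -Complex.I := rfl
lemma vmI_1 : vmI 1 = (1 : ℂ) := rfl

lemma frob_inv (B : SL2C) :
    frob ((B⁻¹ : SL2C) : Matrix (Fin 2) (Fin 2) ℂ) = frob (B : Matrix (Fin 2) (Fin 2) ℂ) := by
  rw [Matrix.SpecialLinearGroup.SL2_inv_expl B]
  simp only [frob]
  norm_num [Matrix.cons_val_zero, Matrix.cons_val_one, Matrix.head_cons, norm_neg]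
  ring

lemma frob_sum (M : Matrix (Fin 2) (Fin 2) ℂ) :
    vnorm (M.mulVec vI) ^ 2 + vnorm (M.mulVec vmI) ^ 2 = 2 * frob M := by
  rw [vnorm_sq, vnorm_sq]
  simp only [Matrix.mulVec, dotProduct, Fin.sum_univ_two, vI_0, vI_1, vmI_0, vmI_1, frob,
    Complex.sq_norm, Complex.normSq_apply, Complex.mul_re, Complex.mul_im,
    Complex.add_re, Complex.add_im, Complex.I_re, Complex.I_im, Complex.one_re, Complex.one_im,
    Complex.neg_re, Complex.neg_im, mul_one]
  ring

/-- Hyperbolic rotation fixing the directions vI, vmI. -/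
noncomputable def Rot (t : ℝ) : Matrix (Fin 2) (Fin 2) ℂ :=
  !![(((t + t⁻¹)/2 : ℝ) : ℂ), (((t - t⁻¹)/2 : ℝ) : ℂ) * Complex.I;
     -((((t - t⁻¹)/2 : ℝ) : ℂ) * Complex.I), (((t + t⁻¹)/2 : ℝ) : ℂ)]

lemma Rot_det (t : ℝ) (ht : t ≠ 0) : (Rot t).det = 1 := by
  rw [Rot, Matrix.det_fin_two_of]
  have hc : ((t : ℂ)) * ((t : ℂ))⁻¹ = 1 := mul_inv_cancel₀ (by exact_mod_cast ht)
  push_cast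
  linear_combination (((t:ℂ) - (t:ℂ)⁻¹)/2)^2 * Complex.I_sq + hc

lemma Rot_mulVec_vI (t : ℝ) : (Rot t).mulVec vI = ((t : ℂ) • vI) := by
  funext i
  fin_cases i
  · simp [Matrix.mulVec, dotProduct, Fin.sum_univ_two, Rot, Matrix.vecHead, Matrix.vecTail, vI]
    ring
  · simp [Matrix.mulVec, dotProduct, Fin.sum_univ_two, Rot, Matrix.vecHead, Matrix.vecTail, vI]
    linear_combination (-(((t:ℂ) - ((t:ℂ))⁻¹)/2)) * Complex.I_sq

lemma Rot_mulVec_vmI (t : ℝ) : (Rot t).mulVec vmI = (((t⁻¹ : ℝ) : ℂ) • vmI) := by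
  funext i
  fin_cases i
  · simp [Matrix.mulVec, dotProduct, Fin.sum_univ_two, Rot, Matrix.vecHead, Matrix.vecTail, vmI]
    ring
  · simp [Matrix.mulVec, dotProduct, Fin.sum_univ_two, Rot, Matrix.vecHead, Matrix.vecTail, vmI]
    linear_combination ((((t:ℂ) - ((t:ℂ))⁻¹)/2)) * Complex.I_sq

lemma Rot_mul_Rot_inv (t : ℝ) (ht : t ≠ 0) : Rot t * Rot t⁻¹ = 1 := by
  have hc : ((t : ℂ)) * ((t : ℂ))⁻¹ = 1 := mul_inv_cancel₀ (by exact_mod_cast ht)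
  ext i j
  fin_cases i <;> fin_cases j
  · simp [Rot, Matrix.mul_apply, Fin.sum_univ_two, Matrix.vecHead, Matrix.vecTail,
      Matrix.one_apply]
    linear_combination (((t:ℂ) - ((t:ℂ))⁻¹)/2)^2 * Complex.I_sq + hc
  · simp [Rot, Matrix.mul_apply, Fin.sum_univ_two, Matrix.vecHead, Matrix.vecTail,
      Matrix.one_apply]
    ring
  · simp [Rot, Matrix.mul_apply, Fin.sum_univ_two, Matrix.vecHead, Matrix.vecTail,
      Matrix.one_apply]
    ring
  · simp [Rot, Matrix.mul_apply, Fin.sum_univ_two, Matrix.vecHead, Matrix.vecTail,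
      Matrix.one_apply]
    linear_combination (((t:ℂ) - ((t:ℂ))⁻¹)/2)^2 * Complex.I_sq + hc

lemma Rot_crossDet_vI (t : ℝ) (u : Fin 2 → ℂ) (h : crossDet u vI = 0) :
    crossDet ((Rot t).mulVec u) vI = 0 := by
  simp only [crossDet, vI_0, vI_1] at h ⊢
  simp [Matrix.mulVec, dotProduct, Fin.sum_univ_two, Rot, Matrix.vecHead, Matrix.vecTail]
  push_cast
  first
    | linear_combination ((((t:ℂ) + ((t:ℂ))⁻¹)/2) - (((t:ℂ) - ((t:ℂ))⁻¹)/2)) * h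
    | linear_combination ((((t:ℂ) + ((t:ℂ))⁻¹)/2) - (((t:ℂ) - ((t:ℂ))⁻¹)/2)) * h
        + ((((t:ℂ) - ((t:ℂ))⁻¹)/2) * u 0) * Complex.I_sq
    | linear_combination ((((t:ℂ) + ((t:ℂ))⁻¹)/2) - (((t:ℂ) - ((t:ℂ))⁻¹)/2)) * h
        - ((((t:ℂ) - ((t:ℂ))⁻¹)/2) * u 0) * Complex.I_sq

lemma Rot_crossDet_vmI (t : ℝ) (u : Fin 2 → ℂ) (h : crossDet u vmI = 0) :
    crossDet ((Rot t).mulVec u) vmI = 0 := by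
  simp only [crossDet, vmI_0, vmI_1] at h ⊢
  simp [Matrix.mulVec, dotProduct, Fin.sum_univ_two, Rot, Matrix.vecHead, Matrix.vecTail]
  push_cast
  first
    | linear_combination ((((t:ℂ) + ((t:ℂ))⁻¹)/2) + (((t:ℂ) - ((t:ℂ))⁻¹)/2)) * h
    | linear_combination ((((t:ℂ) + ((t:ℂ))⁻¹)/2) + (((t:ℂ) - ((t:ℂ))⁻¹)/2)) * h
        + ((((t:ℂ) - ((t:ℂ))⁻¹)/2) * u 0) * Complex.I_sq
    | linear_combination ((((t:ℂ) + ((t:ℂ))⁻¹)/2) + (((t:ℂ) - ((t:ℂ))⁻¹)/2)) * h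
        - ((((t:ℂ) - ((t:ℂ))⁻¹)/2) * u 0) * Complex.I_sq

end Aux3
section Aux4
open Matrix Complex

lemma vnorm_smul_sq (c : ℝ) (u : Fin 2 → ℂ) :
    vnorm (((c : ℂ)) • u) ^ 2 = c ^ 2 * vnorm u ^ 2 := by
  rw [vnorm_sq, vnorm_sq]
  simp only [Pi.smul_apply, smul_eq_mul, norm_mul, Complex.norm_real, Real.norm_eq_abs,
    mul_pow, _root_.sq_abs]
  ring

end Aux4

/-- at a minimizing matrix, ‖B⁻¹·(±i,1)‖² = k(x,y) + k(x,y)⁻¹. -/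
theorem stmt3 (x y : Fin 2 → ℂ) (hx : x ≠ 0) (hy : y ≠ 0) (hdist : ¬ SameDir x y)
    (B : SL2C) (hB : B ∈ Kset x y)
    (hmin : opN (B : Matrix (Fin 2) (Fin 2) ℂ) ^ 2 = kfun x y) :
    vnorm ((((B⁻¹ : SL2C) : Matrix (Fin 2) (Fin 2) ℂ)).mulVec vI) ^ 2
      = kfun x y + (kfun x y)⁻¹ ∧
    vnorm ((((B⁻¹ : SL2C) : Matrix (Fin 2) (Fin 2) ℂ)).mulVec vmI) ^ 2
      = kfun x y + (kfun x y)⁻¹ := by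
  classical
  set A : Matrix (Fin 2) (Fin 2) ℂ := ((B⁻¹ : SL2C) : Matrix (Fin 2) (Fin 2) ℂ) with hA_def
  set k : ℝ := kfun x y with hk_def
  have hdetB : (B : Matrix (Fin 2) (Fin 2) ℂ).det = 1 := B.2
  obtain ⟨hk1, hk2⟩ := opN_sq_spec (B : Matrix (Fin 2) (Fin 2) ℂ) hdetB
  rw [hmin] at hk1 hk2
  set p : ℝ := vnorm (A.mulVec vI) ^ 2 with hp_def
  set q : ℝ := vnorm (A.mulVec vmI) ^ 2 with hq_def
  have hsum : p + q = 2 * (k + k⁻¹) := by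
    rw [hp_def, hq_def, frob_sum A, hA_def, frob_inv, ← hk2]
  have hvI0 : vI ≠ 0 := by
    intro hcon
    have := congrFun hcon 1
    rw [vI_1] at this
    simpa using this
  have hvmI0 : vmI ≠ 0 := by
    intro hcon
    have := congrFun hcon 1
    rw [vmI_1] at this
    simpa using this
  have hAv : ∀ v : Fin 2 → ℂ, v ≠ 0 → A.mulVec v ≠ 0 := by
    intro v hv hcon
    apply hv
    have h1 : (B : Matrix (Fin 2) (Fin 2) ℂ) * A = 1 := by
      rw [hA_def, ← Matrix.SpecialLinearGroup.coe_mul, mul_inv_cancel,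
        Matrix.SpecialLinearGroup.coe_one]
    calc v = (1 : Matrix (Fin 2) (Fin 2) ℂ).mulVec v := (Matrix.one_mulVec v).symm
      _ = (B : Matrix (Fin 2) (Fin 2) ℂ).mulVec (A.mulVec v) := by
          rw [Matrix.mulVec_mulVec, h1]
      _ = 0 := by rw [hcon, Matrix.mulVec_zero]
  have hp_pos : 0 < p := by
    rw [hp_def]; exact pow_pos (vnorm_pos _ (hAv vI hvI0)) 2
  have hq_pos : 0 < q := by
    rw [hq_def]; exact pow_pos (vnorm_pos _ (hAv vmI hvmI0)) 2
  have hkpos : (0 : ℝ) < k := lt_of_lt_of_le one_pos hk1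
  have hineq : ∀ t : ℝ, 0 < t → p + q ≤ (t⁻¹)^2 * p + t^2 * q := by
    intro t ht
    have htne : t ≠ 0 := ne_of_gt ht
    set R : SL2C := ⟨Rot t, Rot_det t htne⟩ with hR_def
    have hRcoe : (R : Matrix (Fin 2) (Fin 2) ℂ) = Rot t := rfl
    have hRB : R * B ∈ Kset x y := by
      constructor
      · have h1 := hB.1
        show crossDet (((R * B : SL2C) : Matrix (Fin 2) (Fin 2) ℂ).mulVec x) vI = 0
        rw [Matrix.SpecialLinearGroup.coe_mul, hRcoe, ← Matrix.mulVec_mulVec]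
        exact Rot_crossDet_vI t _ h1
      · have h2 := hB.2
        show crossDet (((R * B : SL2C) : Matrix (Fin 2) (Fin 2) ℂ).mulVec y) vmI = 0
        rw [Matrix.SpecialLinearGroup.coe_mul, hRcoe, ← Matrix.mulVec_mulVec]
        exact Rot_crossDet_vmI t _ h2
    have hdetRB : ((R * B : SL2C) : Matrix (Fin 2) (Fin 2) ℂ).det = 1 := (R * B).2
    obtain ⟨hm1, hm2⟩ := opN_sq_spec (((R * B : SL2C)) : Matrix (Fin 2) (Fin 2) ℂ) hdetRB
    set m : ℝ := opN (((R * B : SL2C)) : Matrix (Fin 2) (Fin 2) ℂ) ^ 2 with hm_def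
    have hkm : k ≤ m := by
      rw [hk_def, kfun]
      apply csInf_le
      · refine ⟨0, ?_⟩
        rintro r ⟨C, hC, rfl⟩
        positivity
      · exact ⟨R * B, hRB, rfl⟩
    have hRinv : (R⁻¹ : SL2C) = (⟨Rot t⁻¹, Rot_det t⁻¹ (inv_ne_zero htne)⟩ : SL2C) := by
      apply inv_eq_of_mul_eq_one_right
      apply Subtype.ext
      show Rot t * Rot t⁻¹ = ((1 : SL2C) : Matrix (Fin 2) (Fin 2) ℂ)
      show Rot t * Rot t⁻¹ = _
      rw [Rot_mul_Rot_inv t htne, Matrix.SpecialLinearGroup.coe_one]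
    have hcoe : (((R * B)⁻¹ : SL2C) : Matrix (Fin 2) (Fin 2) ℂ) = A * Rot t⁻¹ := by
      rw [_root_.mul_inv_rev, Matrix.SpecialLinearGroup.coe_mul, hRinv, ← hA_def]
    have e4 : (((R * B)⁻¹ : SL2C) : Matrix (Fin 2) (Fin 2) ℂ).mulVec vI
        = (((t⁻¹ : ℝ) : ℂ)) • (A.mulVec vI) := by
      rw [hcoe, ← Matrix.mulVec_mulVec, Rot_mulVec_vI t⁻¹, Matrix.mulVec_smul]
    have e5 : (((R * B)⁻¹ : SL2C) : Matrix (Fin 2) (Fin 2) ℂ).mulVec vmI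
        = ((t : ℂ)) • (A.mulVec vmI) := by
      rw [hcoe, ← Matrix.mulVec_mulVec, Rot_mulVec_vmI t⁻¹, Matrix.mulVec_smul, inv_inv]
    have hfrob' : 2 * (m + m⁻¹) = (t⁻¹)^2 * p + t^2 * q := by
      have e3 := frob_sum (((R * B)⁻¹ : SL2C) : Matrix (Fin 2) (Fin 2) ℂ)
      rw [e4, e5, vnorm_smul_sq, vnorm_smul_sq, frob_inv, ← hm2, ← hp_def, ← hq_def] at e3
      linarith [e3]
    have hmono : k + k⁻¹ ≤ m + m⁻¹ := by
      have hmpos : (0 : ℝ) < m := lt_of_lt_of_le one_pos hm1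
      have h1 : k⁻¹ - m⁻¹ = (m - k) / (k * m) := by field_simp
      have h2 : (m - k) / (k * m) ≤ m - k :=
        div_le_self (by linarith) (by nlinarith)
      linarith
    linarith [hsum, hfrob', hmono]
  -- choose the optimal t to force p = q
  have hpq : p = q := by
    set sp : ℝ := Real.sqrt p with hsp_def
    set sq2 : ℝ := Real.sqrt q with hsq_def
    have hsp_pos : 0 < sp := Real.sqrt_pos.mpr hp_pos
    have hsq_pos : 0 < sq2 := Real.sqrt_pos.mpr hq_pos
    have hsp2 : sp^2 = p := Real.sq_sqrt hp_pos.le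
    have hsq2 : sq2^2 = q := Real.sq_sqrt hq_pos.le
    set t0 : ℝ := Real.sqrt (sp / sq2) with ht0_def
    have ht0_pos : 0 < t0 := Real.sqrt_pos.mpr (div_pos hsp_pos hsq_pos)
    have ht0_sq : t0^2 = sp / sq2 := Real.sq_sqrt (div_pos hsp_pos hsq_pos).le
    have hkey := hineq t0 ht0_pos
    have hrhs : (t0⁻¹)^2 * p + t0^2 * q = 2 * (sp * sq2) := by
      rw [inv_pow, ht0_sq, ← hsp2, ← hsq2]
      field_simp
      ring
    rw [hrhs] at hkey
    have hz : (sp - sq2)^2 = 0 := by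
      have h1 : (sp - sq2)^2 ≤ 0 := by nlinarith [hsp2, hsq2]
      exact le_antisymm h1 (sq_nonneg _)
    have hspq : sp = sq2 := by
      have := pow_eq_zero_iff (n := 2) (by norm_num) |>.mp hz
      linarith [this]
    rw [← hsp2, ← hsq2, hspq]
  constructor
  · linarith [hsum, hpq]
  · linarith [hsum, hpq]
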